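/- (Lemma 1, part 1.) Consider the constrained optimal control problem: maximize J(x₀,u) = ∑_{t=0}^{t_f} L(x_t,u_t) over input sequences u = (u_0,…,u_{t_f}) subject to x_{t+1} = f(x_t,u_t), u_t ≤ u_max, and h(x_t,u_t) ≤ y_max componentwise for all t. Assume: (A1) L : ℝ^n × ℝ → ℝ is continuous and increasing in (x,u); (A2) f : ℝ^n × ℝ → ℝ^n is continuous, and monotone on R̄(x₀,t_f) × (−∞,u_max]; (A3) each component h_i is continuous on ℝ^n × (−∞,u_max] and strictly increasing in u for every x ∈ R̄(x₀,t_f). If an optimal solution exists, then there exists an optimal solution u* that cannot be increased at any single time: for every τ ∈ {0,…,t_f} and every ε > 0, the input sequence û defined by û_τ = u*_τ + ε and û_t = u*_t for t ≠ τ is infeasible. -/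
import Mathlib


open Finset Set

/-- Trajectory of `x_{t+1} = f(x_t,u_t)` from `x₀` under input sequence `u`. -/
noncomputable def traj {n : ℕ} (f : (Fin n → ℝ) → ℝ → (Fin n → ℝ)) (x₀ : Fin n → ℝ)
    (u : ℕ → ℝ) : ℕ → (Fin n → ℝ)
  | 0 => x₀
  | t + 1 => f (traj f x₀ u t) (u t)

/-- An input sequence is feasible if `u_t ≤ u_max` and `h(x_t,u_t) ≤ y_max`
componentwise for all `t ∈ {0,…,t_f}`. -/
def Feasible {n p : ℕ} (f : (Fin n → ℝ) → ℝ → (Fin n → ℝ))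
    (h : (Fin n → ℝ) → ℝ → (Fin p → ℝ)) (x₀ : Fin n → ℝ)
    (umax : ℝ) (ymax : Fin p → ℝ) (tf : ℕ) (u : ℕ → ℝ) : Prop :=
  ∀ t ≤ tf, u t ≤ umax ∧ ∀ i, h (traj f x₀ u t) (u t) i ≤ ymax i

/-- The total cost `J(x₀,u) = ∑_{t=0}^{t_f} L(x_t,u_t)`. -/
noncomputable def Cost {n : ℕ} (f : (Fin n → ℝ) → ℝ → (Fin n → ℝ))
    (L : (Fin n → ℝ) → ℝ → ℝ) (x₀ : Fin n → ℝ) (tf : ℕ) (u : ℕ → ℝ) : ℝ :=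
  ∑ t ∈ Finset.range (tf + 1), L (traj f x₀ u t) (u t)

/-- `u` is optimal if it is feasible and its cost dominates that of every feasible sequence. -/
def Optimal {n p : ℕ} (f : (Fin n → ℝ) → ℝ → (Fin n → ℝ))
    (h : (Fin n → ℝ) → ℝ → (Fin p → ℝ)) (L : (Fin n → ℝ) → ℝ → ℝ)
    (x₀ : Fin n → ℝ) (umax : ℝ) (ymax : Fin p → ℝ) (tf : ℕ) (u : ℕ → ℝ) : Prop :=
  Feasible f h x₀ umax ymax tf u ∧
    ∀ v, Feasible f h x₀ umax ymax tf v → Cost f L x₀ tf v ≤ Cost f L x₀ tf u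

/-- `R̄(x₀,t_f)`: all states visited at some time `t ≤ t_f` by some feasible trajectory. -/
def Reach {n p : ℕ} (f : (Fin n → ℝ) → ℝ → (Fin n → ℝ))
    (h : (Fin n → ℝ) → ℝ → (Fin p → ℝ)) (x₀ : Fin n → ℝ)
    (umax : ℝ) (ymax : Fin p → ℝ) (tf : ℕ) : Set (Fin n → ℝ) :=
  {z | ∃ u, Feasible f h x₀ umax ymax tf u ∧ ∃ t ≤ tf, traj f x₀ u t = z}

lemma traj_congr {n : ℕ} (f : (Fin n → ℝ) → ℝ → (Fin n → ℝ)) (x₀ : Fin n → ℝ)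
    {u v : ℕ → ℝ} : ∀ t : ℕ, (∀ s < t, u s = v s) → traj f x₀ u t = traj f x₀ v t := by
  intro t
  induction t with
  | zero => intro _; rfl
  | succ t ih =>
    intro hs
    simp only [traj]
    rw [ih (fun s hs' => hs s (by omega)), hs t (by omega)]

lemma feasible_congr {n p : ℕ} {f : (Fin n → ℝ) → ℝ → (Fin n → ℝ)}
    {h : (Fin n → ℝ) → ℝ → (Fin p → ℝ)} {x₀ : Fin n → ℝ}
    {umax : ℝ} {ymax : Fin p → ℝ} {tf : ℕ} {u v : ℕ → ℝ}
    (huv : ∀ t ≤ tf, u t = v t) (hu : Feasible f h x₀ umax ymax tf u) :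
    Feasible f h x₀ umax ymax tf v := by
  intro t ht
  rw [← huv t ht, ← traj_congr f x₀ t (fun s hs => huv s (by omega))]
  exact hu t ht

lemma cost_congr {n : ℕ} (f : (Fin n → ℝ) → ℝ → (Fin n → ℝ))
    (L : (Fin n → ℝ) → ℝ → ℝ) (x₀ : Fin n → ℝ) (tf : ℕ) {u v : ℕ → ℝ}
    (huv : ∀ t ≤ tf, u t = v t) : Cost f L x₀ tf u = Cost f L x₀ tf v := by
  apply Finset.sum_congr rfl
  intro t htm
  have ht : t ≤ tf := by simpa [Nat.lt_succ_iff] using htm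
  rw [traj_congr f x₀ t (fun s hs => huv s (by omega)), huv t ht]

lemma optimal_congr {n p : ℕ} {f : (Fin n → ℝ) → ℝ → (Fin n → ℝ)}
    {h : (Fin n → ℝ) → ℝ → (Fin p → ℝ)} {L : (Fin n → ℝ) → ℝ → ℝ} {x₀ : Fin n → ℝ}
    {umax : ℝ} {ymax : Fin p → ℝ} {tf : ℕ} {u v : ℕ → ℝ}
    (huv : ∀ t ≤ tf, u t = v t) (hu : Optimal f h L x₀ umax ymax tf u) :
    Optimal f h L x₀ umax ymax tf v := by
  refine ⟨feasible_congr huv hu.1, fun w hw => ?_⟩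
  rw [← cost_congr f L x₀ tf huv]
  exact hu.2 w hw

def extu (tf : ℕ) (v : Fin (tf + 1) → ℝ) : ℕ → ℝ :=
  fun t => if ht : t < tf + 1 then v ⟨t, ht⟩ else 0

lemma extu_eq {tf : ℕ} (v : Fin (tf + 1) → ℝ) {t : ℕ} (ht : t ≤ tf) :
    extu tf v t = v ⟨t, Nat.lt_succ_of_le ht⟩ := dif_pos _

lemma traj_cont {n tf : ℕ} (f : (Fin n → ℝ) → ℝ → (Fin n → ℝ)) (x₀ : Fin n → ℝ)
    (hfcont : Continuous fun q : (Fin n → ℝ) × ℝ => f q.1 q.2) :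
    ∀ t : ℕ, t ≤ tf → Continuous fun v : Fin (tf + 1) → ℝ => traj f x₀ (extu tf v) t := by
  intro t
  induction t with
  | zero => exact fun _ => continuous_const
  | succ t ih =>
    intro ht
    have h1 : (fun v : Fin (tf + 1) → ℝ => traj f x₀ (extu tf v) (t + 1))
        = fun v => f (traj f x₀ (extu tf v) t) (v ⟨t, by omega⟩) := by
      funext v
      simp only [traj]
      rw [extu_eq v (by omega : t ≤ tf)]
    rw [h1]
    exact hfcont.comp ((ih (by omega)).prodMk (continuous_apply _))

/-- Lemma 1, part 1: under the monotonicity assumptions, there is an optimal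
solution that cannot be increased at any single time instant. -/
theorem exists_optimal_not_increasable {n p tf : ℕ}
    (f : (Fin n → ℝ) → ℝ → (Fin n → ℝ))
    (h : (Fin n → ℝ) → ℝ → (Fin p → ℝ))
    (L : (Fin n → ℝ) → ℝ → ℝ)
    (x₀ : Fin n → ℝ) (umax : ℝ) (ymax : Fin p → ℝ)
    -- (A1) monotone cost
    (hLcont : Continuous fun q : (Fin n → ℝ) × ℝ => L q.1 q.2)
    (hLmono : ∀ (x₁ x₂ : Fin n → ℝ) (u₁ u₂ : ℝ), x₂ ≤ x₁ → u₂ ≤ u₁ → L x₂ u₂ ≤ L x₁ u₁)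
    -- (A2) monotone system
    (hfcont : Continuous fun q : (Fin n → ℝ) × ℝ => f q.1 q.2)
    (hfmono : ∀ x₁ x₂ : Fin n → ℝ, x₁ ∈ Reach f h x₀ umax ymax tf →
      x₂ ∈ Reach f h x₀ umax ymax tf → ∀ u₁ u₂ : ℝ, u₁ ≤ umax → u₂ ≤ umax →
      x₂ ≤ x₁ → u₂ ≤ u₁ → f x₂ u₂ ≤ f x₁ u₁)
    -- (A3) monotone constraint
    (hhcont : ∀ i, ContinuousOn (fun q : (Fin n → ℝ) × ℝ => h q.1 q.2 i)
      (Set.univ ×ˢ Set.Iic umax))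
    (hhmono : ∀ x ∈ Reach f h x₀ umax ymax tf, ∀ i, StrictMono fun v => h x v i)
    -- an optimal solution exists
    (hex : ∃ u, Optimal f h L x₀ umax ymax tf u) :
    ∃ ustar, Optimal f h L x₀ umax ymax tf ustar ∧
      ∀ τ ≤ tf, ∀ ε > (0 : ℝ),
        ¬ Feasible f h x₀ umax ymax tf (Function.update ustar τ (ustar τ + ε)) := by
  classical
  obtain ⟨u0, hu0⟩ := hex
  -- monotone comparison of trajectories and costs
  have stateMono : ∀ u v : ℕ → ℝ, Feasible f h x₀ umax ymax tf u →
      Feasible f h x₀ umax ymax tf v → (∀ t ≤ tf, u t ≤ v t) →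
      ∀ t ≤ tf, traj f x₀ u t ≤ traj f x₀ v t := by
    intro u v hu hv huv t
    induction t with
    | zero => intro _; exact le_rfl
    | succ t ih =>
      intro ht
      have ht' : t ≤ tf := by omega
      exact hfmono (traj f x₀ v t) (traj f x₀ u t) ⟨v, hv, t, ht', rfl⟩ ⟨u, hu, t, ht', rfl⟩
        (v t) (u t) (hv t ht').1 (hu t ht').1 (ih ht') (huv t ht')
  have costMono : ∀ u v : ℕ → ℝ, Feasible f h x₀ umax ymax tf u →
      Feasible f h x₀ umax ymax tf v → (∀ t ≤ tf, u t ≤ v t) →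
      Cost f L x₀ tf u ≤ Cost f L x₀ tf v := by
    intro u v hu hv huv
    apply Finset.sum_le_sum
    intro t htm
    have ht : t ≤ tf := by simpa [Nat.lt_succ_iff] using htm
    exact hLmono _ _ _ _ (stateMono u v hu hv huv t ht) (huv t ht)
  -- characterization of optimality via the optimal value
  have optChar : ∀ u : ℕ → ℝ, Optimal f h L x₀ umax ymax tf u ↔
      (Feasible f h x₀ umax ymax tf u ∧ Cost f L x₀ tf u = Cost f L x₀ tf u0) := by
    intro u
    constructor
    · rintro ⟨hfe, hopt⟩
      exact ⟨hfe, le_antisymm (hu0.2 u hfe) (hopt u0 hu0.1)⟩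
    · rintro ⟨hfe, hco⟩
      exact ⟨hfe, fun w hw => hco ▸ hu0.2 w hw⟩
  -- the set of optimal sequences, restricted to `Fin (tf+1)`
  set F : Set (Fin (tf + 1) → ℝ) :=
    {v | Optimal f h L x₀ umax ymax tf (extu tf v)} with hFdef
  -- closedness of F
  have hA : IsClosed {v : Fin (tf + 1) → ℝ | ∀ t, v t ≤ umax} := by
    have heq : {v : Fin (tf + 1) → ℝ | ∀ t, v t ≤ umax}
        = ⋂ t : Fin (tf + 1), {v : Fin (tf + 1) → ℝ | v t ≤ umax} := by
      ext v; simp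
    rw [heq]
    exact isClosed_iInter fun t => isClosed_le (continuous_apply t) continuous_const
  have hFeasClosed : IsClosed
      {v : Fin (tf + 1) → ℝ | Feasible f h x₀ umax ymax tf (extu tf v)} := by
    have heq : {v : Fin (tf + 1) → ℝ | Feasible f h x₀ umax ymax tf (extu tf v)} =
        {v : Fin (tf + 1) → ℝ | ∀ t, v t ≤ umax} ∩
          ⋂ (t : Fin (tf + 1)), ⋂ (i : Fin p),
            ({v : Fin (tf + 1) → ℝ | ∀ t, v t ≤ umax} ∩
              {v : Fin (tf + 1) → ℝ |
                h (traj f x₀ (extu tf v) t.val) (v t) i ≤ ymax i}) := by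
      ext v
      simp only [Set.mem_setOf_eq, Set.mem_inter_iff, Set.mem_iInter]
      constructor
      · intro hv
        have hb : ∀ t : Fin (tf + 1), v t ≤ umax := by
          intro t
          have := (hv t.val t.is_le).1
          rwa [extu_eq v t.is_le, Fin.eta] at this
        refine ⟨hb, fun t i => ⟨hb, ?_⟩⟩
        have := (hv t.val t.is_le).2 i
        rwa [extu_eq v t.is_le, Fin.eta] at this
      · rintro ⟨h1, h2⟩ t ht
        rw [extu_eq v ht]
        exact ⟨h1 _, fun i => (h2 ⟨t, Nat.lt_succ_of_le ht⟩ i).2⟩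
    rw [heq]
    refine hA.inter (isClosed_iInter fun t => isClosed_iInter fun i => ?_)
    have hcont : ContinuousOn
        (fun v : Fin (tf + 1) → ℝ => h (traj f x₀ (extu tf v) t.val) (v t) i)
        {v : Fin (tf + 1) → ℝ | ∀ t, v t ≤ umax} := by
      refine (hhcont i).comp
        (((traj_cont f x₀ hfcont t.val t.is_le).prodMk (continuous_apply t)).continuousOn) ?_
      intro v hv
      exact ⟨Set.mem_univ _, hv t⟩
    exact hcont.preimage_isClosed_of_isClosed hA isClosed_Iic
  have hCostCont : Continuous fun v : Fin (tf + 1) → ℝ => Cost f L x₀ tf (extu tf v) := by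
    have heq : (fun v : Fin (tf + 1) → ℝ => Cost f L x₀ tf (extu tf v)) =
        fun v => ∑ t : Fin (tf + 1), L (traj f x₀ (extu tf v) t.val) (v t) := by
      funext v
      rw [Cost, ← Fin.sum_univ_eq_sum_range]
      apply Finset.sum_congr rfl
      intro t _
      rw [extu_eq v t.is_le, Fin.eta]
    rw [heq]
    exact continuous_finset_sum _ fun t _ =>
      hLcont.comp ((traj_cont f x₀ hfcont t.val t.is_le).prodMk (continuous_apply t))
  have hFclosed : IsClosed F := by
    have heq : F = {v : Fin (tf + 1) → ℝ | Feasible f h x₀ umax ymax tf (extu tf v)} ∩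
        {v : Fin (tf + 1) → ℝ | Cost f L x₀ tf (extu tf v) = Cost f L x₀ tf u0} := by
      ext v
      simp only [hFdef, Set.mem_setOf_eq, Set.mem_inter_iff]
      exact optChar _
    rw [heq]
    exact hFeasClosed.inter (isClosed_eq hCostCont continuous_const)
  -- F is nonempty
  have hu0F : (fun t : Fin (tf + 1) => u0 t.val) ∈ F := by
    refine optimal_congr (u := u0) ?_ hu0
    intro t ht
    rw [extu_eq _ ht]
  -- chain condition
  have hchainF : ∀ c ⊆ F, IsChain (· ≤ ·) c → ∀ y ∈ c, ∃ ub ∈ F, ∀ z ∈ c, z ≤ ub := by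
    intro c hcF hchain y hyc
    set s : Fin (tf + 1) → ℝ := fun t => sSup ((fun v : Fin (tf + 1) → ℝ => v t) '' c)
      with hsdef
    have hbdd : ∀ t, BddAbove ((fun v : Fin (tf + 1) → ℝ => v t) '' c) := by
      intro t
      refine ⟨umax, ?_⟩
      rintro _ ⟨v, hvc, rfl⟩
      have hvF := hcF hvc
      have := (hvF.1 t.val t.is_le).1
      rwa [extu_eq v t.is_le, Fin.eta] at this
    have hub : ∀ v ∈ c, v ≤ s := fun v hv t => le_csSup (hbdd t) ⟨v, hv, rfl⟩
    have hsc : s ∈ closure c := by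
      rw [Metric.mem_closure_iff]
      intro ε hε
      have hex2 : ∀ t : Fin (tf + 1), ∃ v ∈ c, s t - ε / 2 < v t := by
        intro t
        obtain ⟨a, ha, hlt⟩ := exists_lt_of_lt_csSup (Set.Nonempty.image _ ⟨y, hyc⟩)
          (show s t - ε / 2 < s t by linarith)
        obtain ⟨v, hvc, rfl⟩ := ha
        exact ⟨v, hvc, hlt⟩
      choose g hg1 hg2 using hex2
      have hdir : DirectedOn (· ≤ ·) c := hchain.directedOn
      have hfin : ∀ S : Finset (Fin (tf + 1)), ∃ w ∈ c, ∀ t ∈ S, g t ≤ w := by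
        intro S
        induction S using Finset.induction with
        | empty => exact ⟨y, hyc, by simp⟩
        | @insert a S _ ih =>
          obtain ⟨w, hwc, hw⟩ := ih
          obtain ⟨w', hw'c, hw'1, hw'2⟩ := hdir _ (hg1 a) _ hwc
          refine ⟨w', hw'c, fun t htm => ?_⟩
          rcases Finset.mem_insert.mp htm with rfl | htS
          · exact hw'1
          · exact (hw t htS).trans hw'2
      obtain ⟨w, hwc, hw⟩ := hfin Finset.univ
      refine ⟨w, hwc, ?_⟩
      rw [dist_pi_lt_iff hε]
      intro t
      have hA1 : w t ≤ s t := hub w hwc t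
      have hA2 : s t - ε / 2 < w t :=
        lt_of_lt_of_le (hg2 t) (hw t (Finset.mem_univ t) t)
      rw [Real.dist_eq, abs_lt]
      constructor <;> linarith
    have hsF : s ∈ F := by
      have := closure_mono hcF hsc
      rwa [hFclosed.closure_eq] at this
    exact ⟨s, hsF, hub⟩
  -- Zorn's lemma
  obtain ⟨m, -, hmax⟩ := zorn_le_nonempty₀ F hchainF _ hu0F
  have hmF : Optimal f h L x₀ umax ymax tf (extu tf m) := hmax.1
  refine ⟨extu tf m, hmF, ?_⟩
  intro τ hτ ε hε hfeas
  set uhat := Function.update (extu tf m) τ (extu tf m τ + ε) with huhatdef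
  have hle : ∀ t ≤ tf, extu tf m t ≤ uhat t := by
    intro t ht
    rw [huhatdef, Function.update_apply]
    split_ifs with heq
    · rw [heq]; linarith
    · exact le_rfl
  have huhatopt : Optimal f h L x₀ umax ymax tf uhat := by
    refine ⟨hfeas, fun w hw => ?_⟩
    calc Cost f L x₀ tf w ≤ Cost f L x₀ tf (extu tf m) := hmF.2 w hw
      _ ≤ Cost f L x₀ tf uhat := costMono _ _ hmF.1 hfeas hle
  set v' : Fin (tf + 1) → ℝ := fun t => uhat t.val with hv'def
  have hv'F : v' ∈ F := by
    refine optimal_congr (u := uhat) ?_ huhatopt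
    intro t ht
    rw [extu_eq _ ht]
  have hmle : m ≤ v' := by
    intro t
    have := hle t.val t.is_le
    rwa [extu_eq m t.is_le, Fin.eta] at this
  have hcontra : v' ⟨τ, Nat.lt_succ_of_le hτ⟩ ≤ m ⟨τ, Nat.lt_succ_of_le hτ⟩ :=
    hmax.2 hv'F hmle _
  have h1 : v' ⟨τ, Nat.lt_succ_of_le hτ⟩ = extu tf m τ + ε := by
    rw [hv'def]
    exact Function.update_self _ _ _
  have h2 : extu tf m τ = m ⟨τ, Nat.lt_succ_of_le hτ⟩ := extu_eq m hτ
  rw [h1, h2] at hcontra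
  linarith
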